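/- Fix formal power series e(s) and f_{-1}(s), f_1(s) in x, q, s. For a finite sequence J = (j_1,…,j_n) ∈ {-1,1}^n, define for 1 ≤ k ≤ n+1: a_k = the number of consecutive 1s in J ending at position k−1 (i.e., the length of the maximal run of 1s among j_1,…,j_{k-1} ending at j_{k-1}; a_1 = 0), and b_k = 1 if j_1 = ⋯ = j_{k-1} = 1 and b_k = 0 otherwise. Then the formal power series F(s) := Σ_{n≥0} x^{n+1} Σ_{J∈{-1,1}^n} e(q^{a_{n+1}} s^{b_{n+1}}) ∏_{k=1}^n f_{j_k}(q^{a_k} s^{b_k}) satisfies the functional equation F(s) = x·e(s) + x·f_{-1}(s)·F(1) + x·f_1(s)·F(qs). -/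

import Mathlib

noncomputable section

variable (R : Type*) [CommRing R]

/-- The coefficient ring `R[[q]][s]`: polynomials in `s` over formal power
series in `q`. -/
abbrev QS := Polynomial (PowerSeries R)

/-- Substitution `s ↦ q^a s^b` on the coefficient ring (with `s^0 = 1`). -/
def subAB (a b : ℕ) : QS R →+* QS R :=
  (Polynomial.aeval ((Polynomial.C (PowerSeries.X ^ a) : QS R) * Polynomial.X ^ b)).toRingHom

/-- `a_k` for the word `J` over `{-1,1}` (`true` = 1, `false` = -1), 0-indexed:
the length of the maximal run of 1s among `j_0,…,j_{k-1}` ending at `j_{k-1}`,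
counted as the number of starting positions `i < k` with `J` true on `[i,k)`. -/
def runA (J : ℕ → Bool) (k : ℕ) : ℕ :=
  ((Finset.range k).filter fun i => ∀ j ∈ Finset.Ico i k, J j = true).card

/-- `b_k`: equals `1` if the first `k` entries of `J` are all 1, else `0`. -/
def runB (J : ℕ → Bool) (k : ℕ) : ℕ :=
  if ∀ i < k, J i = true then 1 else 0

/-- Extend a word of length `n` to `ℕ → Bool` by `false`. -/
def extWord (n : ℕ) (J : Fin n → Bool) : ℕ → Bool :=
  fun i => if h : i < n then J ⟨i, h⟩ else false

/-- The explicit series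
`F(s) = Σ_{n≥0} x^{n+1} Σ_{J∈{-1,1}^n} e(q^{a_{n+1}} s^{b_{n+1}}) ∏_{k=1}^n f_{j_k}(q^{a_k} s^{b_k})`. -/
def Fexplicit (e fneg fpos : QS R) : PowerSeries (QS R) :=
  PowerSeries.mk fun m =>
    match m with
    | 0 => 0
    | n + 1 =>
      ∑ J : Fin n → Bool,
        subAB R (runA (extWord n J) n) (runB (extWord n J) n) e *
          ∏ k : Fin n,
            subAB R (runA (extWord n J) k) (runB (extWord n J) k)
              (if J k then fpos else fneg)

/-! Auxiliary lemmas. -/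

lemma subAB_C (a b : ℕ) (c : PowerSeries R) :
    subAB R a b (Polynomial.C c) = Polynomial.C c := by
  simp [subAB, Polynomial.algebraMap_eq]

lemma subAB_X (a b : ℕ) :
    subAB R a b Polynomial.X
      = Polynomial.C (PowerSeries.X ^ a) * Polynomial.X ^ b := by
  simp [subAB]

lemma subAB_zero_one : subAB R 0 1 = RingHom.id _ := by
  apply Polynomial.ringHom_ext
  · intro c; simp [subAB_C]
  · simp [subAB_X]

lemma subAB_comp_00 (a b : ℕ) :
    (subAB R 0 0).comp (subAB R a b) = subAB R a 0 := by
  apply Polynomial.ringHom_ext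
  · intro c; simp [subAB_C]
  · simp only [RingHom.comp_apply, subAB_X, map_mul, map_pow, subAB_C, Polynomial.C_pow,
      pow_zero, mul_pow, one_pow, one_mul, mul_one, map_one]

lemma subAB_comp_11 (a b : ℕ) :
    (subAB R 1 1).comp (subAB R a b) = subAB R (a + b) b := by
  apply Polynomial.ringHom_ext
  · intro c; simp [subAB_C]
  · simp only [RingHom.comp_apply, subAB_X, map_mul, map_pow, subAB_C, Polynomial.C_pow,
      pow_one, mul_pow, pow_add]
    ring_nf

lemma runA_zero (J : ℕ → Bool) : runA J 0 = 0 := by simp [runA]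
lemma runB_zero (J : ℕ → Bool) : runB J 0 = 1 := by simp [runB]

lemma runB_succ (T : ℕ → Bool) (k : ℕ) :
    runB T (k + 1) = if T 0 = true then runB (fun i => T (i + 1)) k else 0 := by
  unfold runB
  have h : (∀ i < k + 1, T i = true) ↔ (T 0 = true ∧ ∀ i < k, T (i + 1) = true) := by
    constructor
    · intro h; exact ⟨h 0 (Nat.succ_pos _), fun i hi => h (i + 1) (by omega)⟩
    · rintro ⟨h0, h1⟩ i hi
      cases i with
      | zero => exact h0
      | succ j => exact h1 j (by omega)
  by_cases h0 : T 0 = true <;> by_cases h1 : ∀ i < k, T (i + 1) = true <;>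
    simp only [h] <;> simp [h0, h1]

lemma runA_succ (T : ℕ → Bool) (k : ℕ) :
    runA T (k + 1) = runA (fun i => T (i + 1)) k + runB T (k + 1) := by
  unfold runA runB
  rw [Finset.card_filter, Finset.card_filter, Finset.sum_range_succ']
  congr 1
  · apply Finset.sum_congr rfl
    intro i _
    congr 1
    simp only [eq_iff_iff, Finset.mem_Ico]
    constructor
    · intro h j hj; exact h (j + 1) (by omega)
    · intro h j hj
      obtain ⟨j', rfl⟩ : ∃ j'', j = j'' + 1 := ⟨j - 1, by omega⟩
      exact h j' (by omega)
  · congr 1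
    simp only [eq_iff_iff, Finset.mem_Ico]
    constructor
    · intro h i hi; exact h i ⟨Nat.zero_le _, hi⟩
    · intro h j hj; exact h j hj.2

lemma extWord_succ_eq (m : ℕ) (J : Fin (m + 1) → Bool) :
    (fun i => extWord (m + 1) J (i + 1)) = extWord m (fun k => J k.succ) := by
  funext i
  unfold extWord
  by_cases h : i < m
  · rw [dif_pos h, dif_pos (by omega)]
    rfl
  · rw [dif_neg h, dif_neg (by omega)]

lemma extWord_zero (m : ℕ) (J : Fin (m + 1) → Bool) :
    extWord (m + 1) J 0 = J 0 := by
  unfold extWord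
  rw [dif_pos (Nat.succ_pos _)]
  rfl

/-- One summand of `Fexplicit`. -/
def termW (e fneg fpos : QS R) (n : ℕ) (J : Fin n → Bool) : QS R :=
  subAB R (runA (extWord n J) n) (runB (extWord n J) n) e *
    ∏ k : Fin n,
      subAB R (runA (extWord n J) k) (runB (extWord n J) k)
        (if J k then fpos else fneg)

lemma coeff_Fexplicit (e fneg fpos : QS R) (n : ℕ) :
    PowerSeries.coeff (n + 1) (Fexplicit R e fneg fpos)
      = ∑ J : Fin n → Bool, termW R e fneg fpos n J := by
  simp [Fexplicit, termW]

lemma key_sub (m : ℕ) (J : Fin (m + 1) → Bool) (k : ℕ) (x : QS R) :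
    subAB R (runA (extWord (m + 1) J) (k + 1)) (runB (extWord (m + 1) J) (k + 1)) x
      = (if J 0 = true then subAB R 1 1 else subAB R 0 0)
          (subAB R (runA (extWord m (fun i => J i.succ)) k)
            (runB (extWord m (fun i => J i.succ)) k) x) := by
  rw [runA_succ, runB_succ, extWord_succ_eq, extWord_zero]
  by_cases hJ : J 0 = true
  · simp only [if_pos hJ]
    rw [← RingHom.comp_apply, subAB_comp_11]
  · simp only [if_neg hJ]
    rw [Nat.add_zero, ← RingHom.comp_apply, subAB_comp_00]

lemma termW_succ (e fneg fpos : QS R) (m : ℕ) (J : Fin (m + 1) → Bool) :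
    termW R e fneg fpos (m + 1) J
      = (if J 0 = true then fpos else fneg) *
          (if J 0 = true then subAB R 1 1 else subAB R 0 0)
            (termW R e fneg fpos m (fun i => J i.succ)) := by
  set φ : QS R →+* QS R := if J 0 = true then subAB R 1 1 else subAB R 0 0 with hφ
  unfold termW
  rw [Fin.prod_univ_succ]
  have h0 : subAB R (runA (extWord (m + 1) J) ((0 : Fin (m + 1)) : ℕ))
      (runB (extWord (m + 1) J) ((0 : Fin (m + 1)) : ℕ)) (if J 0 = true then fpos else fneg)
      = (if J 0 = true then fpos else fneg) := by
    show subAB R (runA (extWord (m + 1) J) 0) (runB (extWord (m + 1) J) 0) _ = _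
    rw [runA_zero, runB_zero, subAB_zero_one]
    rfl
  rw [h0]
  have he : subAB R (runA (extWord (m + 1) J) (m + 1)) (runB (extWord (m + 1) J) (m + 1)) e
      = φ (subAB R (runA (extWord m (fun i => J i.succ)) m)
          (runB (extWord m (fun i => J i.succ)) m) e) := key_sub R m J m e
  have hf : ∀ k : Fin m,
      subAB R (runA (extWord (m + 1) J) ((k.succ : Fin (m + 1)) : ℕ))
        (runB (extWord (m + 1) J) ((k.succ : Fin (m + 1)) : ℕ)) (if J k.succ then fpos else fneg)
      = φ (subAB R (runA (extWord m (fun i => J i.succ)) k)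
          (runB (extWord m (fun i => J i.succ)) k)
          (if (fun i => J i.succ) k then fpos else fneg)) := by
    intro k
    rw [Fin.val_succ]
    exact key_sub R m J k _
  rw [he, Finset.prod_congr rfl fun k _ => hf k, map_mul φ, map_prod φ]
  ring_nf

/-- The explicit series satisfies the functional equation
`F(s) = x·e(s) + x·f_{-1}(s)·F(1) + x·f_1(s)·F(qs)`. -/
theorem Fexplicit_functional_equation (e fneg fpos : QS R) :
    Fexplicit R e fneg fpos
      = PowerSeries.X * PowerSeries.C e
      + PowerSeries.X * PowerSeries.C fneg
          * PowerSeries.map (subAB R 0 0) (Fexplicit R e fneg fpos)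
      + PowerSeries.X * PowerSeries.C fpos
          * PowerSeries.map (subAB R 1 1) (Fexplicit R e fneg fpos) := by
  ext m
  cases m with
  | zero =>
    simp [Fexplicit, PowerSeries.coeff_zero_eq_constantCoeff]
  | succ n =>
    rw [map_add, map_add, mul_assoc, mul_assoc, PowerSeries.coeff_succ_X_mul,
      PowerSeries.coeff_succ_X_mul, PowerSeries.coeff_succ_X_mul,
      PowerSeries.coeff_C_mul, PowerSeries.coeff_C_mul, PowerSeries.coeff_map,
      PowerSeries.coeff_map, coeff_Fexplicit]
    cases n with
    | zero =>
      have h0 : PowerSeries.coeff 0 (Fexplicit R e fneg fpos) = 0 := by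
        simp [Fexplicit]
      rw [h0, map_zero, map_zero, mul_zero, mul_zero, add_zero, add_zero]
      rw [Fintype.sum_unique]
      unfold termW
      rw [Fin.prod_univ_zero, mul_one, runA_zero, runB_zero, subAB_zero_one]
      simp
    | succ m =>
      rw [← Equiv.sum_comp (Fin.consEquiv (fun _ => Bool))
        (termW R e fneg fpos (m + 1)), Fintype.sum_prod_type, Fintype.sum_bool]
      have hcons : ∀ (b : Bool) (J' : Fin m → Bool),
          termW R e fneg fpos (m + 1) ((Fin.consEquiv (fun _ => Bool)) (b, J'))
            = (if b = true then fpos else fneg) *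
                (if b = true then subAB R 1 1 else subAB R 0 0)
                  (termW R e fneg fpos m J') := by
        intro b J'
        have h1 : (Fin.consEquiv (fun _ => Bool)) (b, J') = Fin.cons b J' := rfl
        have h2 : (fun i : Fin m => (Fin.cons b J' : Fin (m+1) → Bool) i.succ) = J' := by
          funext i; simp
        rw [h1, termW_succ, h2]
        simp
      have hT : ∀ J' : Fin m → Bool,
          termW R e fneg fpos (m + 1) ((Fin.consEquiv (fun _ => Bool)) (true, J'))
            = fpos * subAB R 1 1 (termW R e fneg fpos m J') := by
        intro J'; simp [hcons]
      have hF : ∀ J' : Fin m → Bool,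
          termW R e fneg fpos (m + 1) ((Fin.consEquiv (fun _ => Bool)) (false, J'))
            = fneg * subAB R 0 0 (termW R e fneg fpos m J') := by
        intro J'; simp [hcons]
      simp only [hT, hF]
      rw [← Finset.mul_sum, ← Finset.mul_sum, ← map_sum, ← map_sum, coeff_Fexplicit]
      have hC : PowerSeries.coeff (m + 1) (PowerSeries.C e) = 0 := by
        rw [PowerSeries.coeff_C, if_neg (Nat.succ_ne_zero m)]
      rw [hC, zero_add]
      ring_nf

end
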